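/- (Degree/Lefschetz argument for strip crossing) Let U = {(v,w) : |v| ≤ r, |w| ≤ τ} be a rectangle, let R₁ ⊂ U be a compact set homeomorphic to a rectangle whose boundary consists of two disjoint vertical arcs contained in the interiors of the two vertical components and two horizontal arcs, and similarly R₂ a horizontal strip of U crossing R₁. Suppose G : R₁ → R₂ is a homeomorphism mapping the left/right (vertical) boundary arcs of R₁ onto the left/right boundary arcs of R₂ and the top/bottom (horizontal) boundary arcs of R₁ onto the top/bottom boundary arcs of R₂, where the vertical boundary of R₂ lies outside R₁ horizontally and the horizontal boundary of R₂ lies strictly inside R₁ vertically. Then G has a fixed point in R₁ ∩ R₂. -/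

import Mathlib

open Finset

namespace Stmt17Aux

/-- Edge indicator: `1` iff the two labels are `{0,1}`. -/
def e3 (x y : Fin 3) : ZMod 2 := if (x = 0 ∧ y = 1) ∨ (x = 1 ∧ y = 0) then 1 else 0

/-- boundary value for the top row -/
def g3 (x : Fin 3) : ZMod 2 := if x = 0 then 0 else 1

lemma g3_ne0' : ∀ x : Fin 3, x ≠ 0 → g3 x = 1 := by decide

lemma tri_of_ne' : ∀ x y z : Fin 3, e3 x y + e3 y z + e3 x z ≠ 0 →
    (x = 0 ∨ y = 0 ∨ z = 0) ∧ (x = 1 ∨ y = 1 ∨ z = 1) ∧ (x = 2 ∨ y = 2 ∨ z = 2) := by decide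

lemma tri_of_ne (x y z : Fin 3) (h : e3 x y + e3 y z + e3 x z ≠ 0) :
    (x = 0 ∨ y = 0 ∨ z = 0) ∧ (x = 1 ∨ y = 1 ∨ z = 1) ∧ (x = 2 ∨ y = 2 ∨ z = 2) :=
  tri_of_ne' x y z h

lemma e3_no0' : ∀ x y : Fin 3, x ≠ 0 → y ≠ 0 → e3 x y = 0 := by decide
lemma e3_no0 (x y : Fin 3) (hx : x ≠ 0) (hy : y ≠ 0) : e3 x y = 0 := e3_no0' x y hx hy

lemma e3_no1' : ∀ x y : Fin 3, x ≠ 1 → y ≠ 1 → e3 x y = 0 := by decide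
lemma e3_no1 (x y : Fin 3) (hx : x ≠ 1) (hy : y ≠ 1) : e3 x y = 0 := e3_no1' x y hx hy

lemma e3_top' : ∀ x y : Fin 3, x ≠ 2 → y ≠ 2 → e3 x y = g3 y - g3 x := by decide
lemma e3_top (x y : Fin 3) (hx : x ≠ 2) (hy : y ≠ 2) : e3 x y = g3 y - g3 x := e3_top' x y hx hy

/-- Two–dimensional combinatorial Poincaré–Miranda (Sperner-type parity argument). -/
lemma sperner_grid (n : ℕ) (L : ℕ → ℕ → Fin 3)
    (hl : ∀ j, j ≤ n → L 0 j = 0)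
    (hb : ∀ i, i ≤ n → L i 0 ≠ 1)
    (hr : ∀ j, j ≤ n → L n j ≠ 0)
    (ht : ∀ i, i ≤ n → L i n ≠ 2) :
    ∃ i j, i < n ∧ j < n ∧
      ∃ a b c : ℕ × ℕ,
        (a.1 = i ∨ a.1 = i+1) ∧ (a.2 = j ∨ a.2 = j+1) ∧
        (b.1 = i ∨ b.1 = i+1) ∧ (b.2 = j ∨ b.2 = j+1) ∧
        (c.1 = i ∨ c.1 = i+1) ∧ (c.2 = j ∨ c.2 = j+1) ∧
        L a.1 a.2 = 0 ∧ L b.1 b.2 = 1 ∧ L c.1 c.2 = 2 := by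
  by_contra hcon
  push_neg at hcon
  -- edge weights
  set H : ℕ → ℕ → ZMod 2 := fun i j => e3 (L i j) (L (i+1) j) with hH
  set V : ℕ → ℕ → ZMod 2 := fun i j => e3 (L i j) (L i (j+1)) with hV
  set D : ℕ → ℕ → ZMod 2 := fun i j => e3 (L i j) (L (i+1) (j+1)) with hD
  -- triangle weights
  set w₀ : ℕ → ℕ → ZMod 2 := fun i j => H i j + V (i+1) j + D i j with hw0
  set w₁ : ℕ → ℕ → ZMod 2 := fun i j => V i j + H i (j+1) + D i j with hw1
  -- every triangle weight vanishes
  have hzero : ∀ i j, i < n → j < n → w₀ i j = 0 ∧ w₁ i j = 0 := by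
    intro i j hi hj
    constructor
    · by_contra hne
      have h := tri_of_ne (L i j) (L (i+1) j) (L (i+1) (j+1)) (by
        simpa [hw0, hH, hV, hD, add_comm, add_left_comm, add_assoc] using hne)
      obtain ⟨h0, h1, h2⟩ := h
      -- extract witnesses among the three vertices
      have := hcon i j hi hj
      rcases h0 with h0 | h0 | h0 <;> rcases h1 with h1 | h1 | h1 <;>
        rcases h2 with h2 | h2 | h2 <;>
        first
        | exact absurd h1 (by rw [h0]; decide)
        | exact absurd h2 (by rw [h0]; decide)
        | exact absurd h2 (by rw [h1]; decide)
        | exact this ⟨i, j⟩ ⟨i+1, j⟩ ⟨i+1, j+1⟩ (Or.inl rfl) (Or.inl rfl) (Or.inr rfl)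
            (Or.inl rfl) (Or.inr rfl) (Or.inr rfl) (by simpa using h0) (by simpa using h1)
            (by simpa using h2)
        | exact this ⟨i, j⟩ ⟨i+1, j+1⟩ ⟨i+1, j⟩ (Or.inl rfl) (Or.inl rfl) (Or.inr rfl)
            (Or.inr rfl) (Or.inr rfl) (Or.inl rfl) (by simpa using h0) (by simpa using h1)
            (by simpa using h2)
        | exact this ⟨i+1, j⟩ ⟨i, j⟩ ⟨i+1, j+1⟩ (Or.inr rfl) (Or.inl rfl) (Or.inl rfl)
            (Or.inl rfl) (Or.inr rfl) (Or.inr rfl) (by simpa using h0) (by simpa using h1)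
            (by simpa using h2)
        | exact this ⟨i+1, j⟩ ⟨i+1, j+1⟩ ⟨i, j⟩ (Or.inr rfl) (Or.inl rfl) (Or.inr rfl)
            (Or.inr rfl) (Or.inl rfl) (Or.inl rfl) (by simpa using h0) (by simpa using h1)
            (by simpa using h2)
        | exact this ⟨i+1, j+1⟩ ⟨i, j⟩ ⟨i+1, j⟩ (Or.inr rfl) (Or.inr rfl) (Or.inl rfl)
            (Or.inl rfl) (Or.inr rfl) (Or.inl rfl) (by simpa using h0) (by simpa using h1)
            (by simpa using h2)
        | exact this ⟨i+1, j+1⟩ ⟨i+1, j⟩ ⟨i, j⟩ (Or.inr rfl) (Or.inr rfl) (Or.inr rfl)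
            (Or.inl rfl) (Or.inl rfl) (Or.inl rfl) (by simpa using h0) (by simpa using h1)
            (by simpa using h2)
    · by_contra hne
      have h := tri_of_ne (L i j) (L i (j+1)) (L (i+1) (j+1)) (by
        simpa [hw1, hH, hV, hD, add_comm, add_left_comm, add_assoc] using hne)
      obtain ⟨h0, h1, h2⟩ := h
      have := hcon i j hi hj
      rcases h0 with h0 | h0 | h0 <;> rcases h1 with h1 | h1 | h1 <;>
        rcases h2 with h2 | h2 | h2 <;>
        first
        | exact absurd h1 (by rw [h0]; decide)
        | exact absurd h2 (by rw [h0]; decide)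
        | exact absurd h2 (by rw [h1]; decide)
        | exact this ⟨i, j⟩ ⟨i, j+1⟩ ⟨i+1, j+1⟩ (Or.inl rfl) (Or.inl rfl) (Or.inl rfl)
            (Or.inr rfl) (Or.inr rfl) (Or.inr rfl) (by simpa using h0) (by simpa using h1)
            (by simpa using h2)
        | exact this ⟨i, j⟩ ⟨i+1, j+1⟩ ⟨i, j+1⟩ (Or.inl rfl) (Or.inl rfl) (Or.inr rfl)
            (Or.inr rfl) (Or.inl rfl) (Or.inr rfl) (by simpa using h0) (by simpa using h1)
            (by simpa using h2)
        | exact this ⟨i, j+1⟩ ⟨i, j⟩ ⟨i+1, j+1⟩ (Or.inl rfl) (Or.inr rfl) (Or.inl rfl)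
            (Or.inl rfl) (Or.inr rfl) (Or.inr rfl) (by simpa using h0) (by simpa using h1)
            (by simpa using h2)
        | exact this ⟨i, j+1⟩ ⟨i+1, j+1⟩ ⟨i, j⟩ (Or.inl rfl) (Or.inr rfl) (Or.inr rfl)
            (Or.inr rfl) (Or.inl rfl) (Or.inl rfl) (by simpa using h0) (by simpa using h1)
            (by simpa using h2)
        | exact this ⟨i+1, j+1⟩ ⟨i, j⟩ ⟨i, j+1⟩ (Or.inr rfl) (Or.inr rfl) (Or.inl rfl)
            (Or.inl rfl) (Or.inl rfl) (Or.inr rfl) (by simpa using h0) (by simpa using h1)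
            (by simpa using h2)
        | exact this ⟨i+1, j+1⟩ ⟨i, j+1⟩ ⟨i, j⟩ (Or.inr rfl) (Or.inr rfl) (Or.inl rfl)
            (Or.inr rfl) (Or.inl rfl) (Or.inl rfl) (by simpa using h0) (by simpa using h1)
            (by simpa using h2)
  -- total sum of triangle weights
  have hS0 : ∑ i ∈ range n, ∑ j ∈ range n, (w₀ i j + w₁ i j) = 0 := by
    apply Finset.sum_eq_zero
    intro i hi
    apply Finset.sum_eq_zero
    intro j hj
    rw [(hzero i j (mem_range.mp hi) (mem_range.mp hj)).1,
      (hzero i j (mem_range.mp hi) (mem_range.mp hj)).2, add_zero]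
  -- rewrite each cell's weight as boundary-telescoping terms
  have hcell : ∀ i j : ℕ, w₀ i j + w₁ i j =
      (H i (j+1) - H i j) + (V (i+1) j - V i j) := by
    intro i j
    have h2 : D i j + D i j = 0 := by
      have : (2 : ZMod 2) = 0 := by decide
      calc D i j + D i j = 2 * D i j := by ring
      _ = 0 := by rw [this]; ring
    have hsub : ∀ a b : ZMod 2, a - b = a + b := by decide
    rw [hsub, hsub]
    linear_combination h2
  have key : (0 : ZMod 2) = ∑ i ∈ range n, H i n := by
    have e1 : ∑ i ∈ range n, ∑ j ∈ range n, (w₀ i j + w₁ i j)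
        = (∑ i ∈ range n, (H i n - H i 0)) + (∑ j ∈ range n, (V n j - V 0 j)) := by
      simp_rw [hcell, Finset.sum_add_distrib]
      congr 1
      · exact Finset.sum_congr rfl fun i _ => Finset.sum_range_sub (fun j => H i j) n
      · rw [Finset.sum_comm]
        exact Finset.sum_congr rfl fun j _ => Finset.sum_range_sub (fun i => V i j) n
    rw [hS0] at e1
    have hHb : ∀ i ∈ range n, H i n - H i 0 = H i n := by
      intro i hi
      have hi' := mem_range.mp hi
      rw [show H i 0 = 0 from e3_no1 _ _ (hb i (le_of_lt hi')) (hb (i+1) hi'), sub_zero]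
    have hVb : ∀ j ∈ range n, V n j - V 0 j = 0 := by
      intro j hj
      have hj' := mem_range.mp hj
      rw [show V n j = 0 from e3_no0 _ _ (hr j (le_of_lt hj')) (hr (j+1) hj'),
        show V 0 j = 0 from e3_no1 _ _ (by rw [hl j (le_of_lt hj')]; decide)
          (by rw [hl (j+1) hj']; decide), sub_zero]
    rw [Finset.sum_congr rfl hHb, Finset.sum_congr rfl hVb] at e1
    simpa using e1
  have key2 : (∑ i ∈ range n, H i n) = 1 := by
    have ht' : ∀ i ∈ range n, H i n = g3 (L (i+1) n) - g3 (L i n) := by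
      intro i hi
      have hi' := mem_range.mp hi
      exact e3_top _ _ (ht i (le_of_lt hi')) (ht (i+1) hi')
    rw [Finset.sum_congr rfl ht', Finset.sum_range_sub (fun i => g3 (L i n)) n,
      hl n le_rfl, g3_ne0' _ (hr n le_rfl)]
    decide
  rw [key2] at key
  exact absurd key (by decide)


end Stmt17Aux

/-- Two-dimensional Poincaré–Miranda theorem on the unit square. -/
theorem miranda (F : ℝ × ℝ → ℝ × ℝ)
    (hc : ContinuousOn F (Set.Icc 0 1 ×ˢ Set.Icc 0 1))
    (hlft : ∀ t ∈ Set.Icc (0:ℝ) 1, (F (0, t)).1 < 0)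
    (hrt : ∀ t ∈ Set.Icc (0:ℝ) 1, 0 < (F (1, t)).1)
    (hbot : ∀ s ∈ Set.Icc (0:ℝ) 1, 0 < (F (s, 0)).2)
    (htop : ∀ s ∈ Set.Icc (0:ℝ) 1, (F (s, 1)).2 < 0) :
    ∃ p ∈ Set.Icc (0:ℝ) 1 ×ˢ Set.Icc (0:ℝ) 1, F p = 0 := by
  set Q : Set (ℝ × ℝ) := Set.Icc (0:ℝ) 1 ×ˢ Set.Icc (0:ℝ) 1 with hQ
  -- grid points
  have main : ∀ n : ℕ, ∃ A B C : ℝ × ℝ, A ∈ Q ∧ B ∈ Q ∧ C ∈ Q ∧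
      dist B A ≤ 1 / (n+1) ∧ dist C A ≤ 1 / (n+1) ∧
      (F A).1 < 0 ∧ 0 ≤ (F B).1 ∧ (F B).2 < 0 ∧ 0 ≤ (F C).2 := by
    intro n
    set N : ℕ := n + 1 with hN
    have hN0 : (0:ℝ) < N := by positivity
    set pt : ℕ → ℕ → ℝ × ℝ := fun i j => ((i : ℝ) / N, (j : ℝ) / N) with hpt
    have hmem : ∀ i j : ℕ, i ≤ N → j ≤ N → pt i j ∈ Q := by
      intro i j hi hj
      constructor
      · constructor
        · positivity
        · rw [div_le_one hN0]; exact_mod_cast hi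
      · constructor
        · positivity
        · rw [div_le_one hN0]; exact_mod_cast hj
    set L : ℕ → ℕ → Fin 3 := fun i j =>
      if (F (pt i j)).1 < 0 then 0 else if (F (pt i j)).2 < 0 then 1 else 2 with hL
    obtain ⟨i, j, hi, hj, a, b, c, ha1, ha2, hb1, hb2, hc1, hc2, hla, hlb, hlc⟩ :=
      Stmt17Aux.sperner_grid N L
        (by
          intro j hj
          have h0 : pt 0 j = (0, (j:ℝ)/N) := by simp [hpt]
          have := hlft ((j:ℝ)/N) (hmem 0 j (Nat.zero_le _) hj).2
          simp only [hL, h0]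
          rw [if_pos this])
        (by
          intro i hi
          have h0 : pt i 0 = ((i:ℝ)/N, 0) := by simp [hpt]
          have := hbot ((i:ℝ)/N) (hmem i 0 hi (Nat.zero_le _)).1
          simp only [hL, h0]
          split
          · decide
          · rw [if_neg (by linarith)]
            decide)
        (by
          intro j hj
          have h0 : pt N j = (1, (j:ℝ)/N) := by
            simp [hpt, div_self (ne_of_gt hN0)]
          have := hrt ((j:ℝ)/N) (hmem N j le_rfl hj).2
          simp only [hL, h0]
          rw [if_neg (by linarith)]
          split <;> decide)
        (by
          intro i hi
          have h0 : pt i N = ((i:ℝ)/N, 1) := by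
            simp [hpt, div_self (ne_of_gt hN0)]
          have := htop ((i:ℝ)/N) (hmem i N hi le_rfl).1
          simp only [hL, h0]
          split <;> first | decide | exact absurd this (by assumption))
    -- decode labels
    have hmem' : ∀ x : ℕ × ℕ, (x.1 = i ∨ x.1 = i+1) → (x.2 = j ∨ x.2 = j+1) →
        pt x.1 x.2 ∈ Q := by
      rintro x (h1 | h1) (h2 | h2) <;> rw [h1, h2] <;>
        exact hmem _ _ (by omega) (by omega)
    have hco : ∀ x y : ℕ, (x = i ∨ x = i+1) → (y = i ∨ y = i+1) →
        dist ((x:ℝ)/N) ((y:ℝ)/N) ≤ 1 / N := by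
      rintro x y (h1 | h1) (h2 | h2) <;> subst h1 <;> subst h2 <;>
        · rw [Real.dist_eq, div_sub_div_same, abs_div, abs_of_pos hN0,
            div_le_div_iff_of_pos_right hN0]
          push_cast
          rw [abs_le]
          constructor <;> linarith
    have hdist : ∀ x y : ℕ × ℕ, (x.1 = i ∨ x.1 = i+1) → (x.2 = j ∨ x.2 = j+1) →
        (y.1 = i ∨ y.1 = i+1) → (y.2 = j ∨ y.2 = j+1) →
        dist (pt x.1 x.2) (pt y.1 y.2) ≤ 1 / N := by
      intro x y hx1 hx2 hy1 hy2
      rw [Prod.dist_eq]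
      refine max_le (hco _ _ hx1 hy1) ?_
      have h1N : (0:ℝ) ≤ 1 / N := by positivity
      rcases hx2 with h1 | h1 <;> rcases hy2 with h2 | h2 <;> rw [h1, h2] <;>
        · rw [Real.dist_eq, div_sub_div_same, abs_div, abs_of_pos hN0,
            div_le_div_iff_of_pos_right hN0]
          push_cast
          rw [abs_le]
          constructor <;> linarith
    have hfa : (F (pt a.1 a.2)).1 < 0 := by
      by_contra hcon
      simp only [hL] at hla
      rw [if_neg hcon] at hla
      revert hla; split <;> decide
    have hfb : 0 ≤ (F (pt b.1 b.2)).1 ∧ (F (pt b.1 b.2)).2 < 0 := by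
      simp only [hL] at hlb
      by_cases h1 : (F (pt b.1 b.2)).1 < 0
      · rw [if_pos h1] at hlb; exact absurd hlb (by decide)
      · rw [if_neg h1] at hlb
        refine ⟨le_of_not_gt h1, ?_⟩
        by_contra h2
        rw [if_neg h2] at hlb; exact absurd hlb (by decide)
    have hfc : 0 ≤ (F (pt c.1 c.2)).2 := by
      by_contra h2
      push_neg at h2
      simp only [hL] at hlc
      by_cases h1 : (F (pt c.1 c.2)).1 < 0
      · rw [if_pos h1] at hlc; exact absurd hlc (by decide)
      · rw [if_neg h1, if_pos h2] at hlc; exact absurd hlc (by decide)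
    refine ⟨pt a.1 a.2, pt b.1 b.2, pt c.1 c.2, hmem' a ha1 ha2, hmem' b hb1 hb2,
      hmem' c hc1 hc2, ?_, ?_, hfa, hfb.1, hfb.2, hfc⟩
    · have h := hdist b a hb1 hb2 ha1 ha2
      rw [hN] at h
      push_cast at h ⊢
      linarith
    · have h := hdist c a hc1 hc2 ha1 ha2
      rw [hN] at h
      push_cast at h ⊢
      linarith
  -- pass to the limit
  choose A B C hA hB hC hdB hdC hfa hfb1 hfb2 hfc using main
  have hQc : IsCompact Q := isCompact_Icc.prod isCompact_Icc
  obtain ⟨q, hq, φ, hφ, hconv⟩ := hQc.tendsto_subseq hA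
  have hone : Filter.Tendsto (fun k : ℕ => 1 / ((φ k : ℝ) + 1)) Filter.atTop (nhds 0) := by
    have := (tendsto_one_div_add_atTop_nhds_zero_nat (𝕜 := ℝ)).comp hφ.tendsto_atTop
    simpa [Function.comp_def] using this
  have hdA : Filter.Tendsto (fun k => dist (A (φ k)) q) Filter.atTop (nhds 0) :=
    tendsto_iff_dist_tendsto_zero.mp hconv
  have hBconv : Filter.Tendsto (fun k => B (φ k)) Filter.atTop (nhds q) := by
    rw [tendsto_iff_dist_tendsto_zero]
    refine squeeze_zero (fun k => dist_nonneg) (fun k => ?_)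
      (by simpa only [add_zero] using hone.add hdA)
    calc dist (B (φ k)) q ≤ dist (B (φ k)) (A (φ k)) + dist (A (φ k)) q := dist_triangle _ _ _
      _ ≤ 1 / ((φ k : ℝ) + 1) + dist (A (φ k)) q := by
          have := hdB (φ k); push_cast at this ⊢; linarith
  have hCconv : Filter.Tendsto (fun k => C (φ k)) Filter.atTop (nhds q) := by
    rw [tendsto_iff_dist_tendsto_zero]
    refine squeeze_zero (fun k => dist_nonneg) (fun k => ?_)
      (by simpa only [add_zero] using hone.add hdA)
    calc dist (C (φ k)) q ≤ dist (C (φ k)) (A (φ k)) + dist (A (φ k)) q := dist_triangle _ _ _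
      _ ≤ 1 / ((φ k : ℝ) + 1) + dist (A (φ k)) q := by
          have := hdC (φ k); push_cast at this ⊢; linarith
  have hFcont := (hc q hq).tendsto
  have hFA : Filter.Tendsto (fun k => F (A (φ k))) Filter.atTop (nhds (F q)) :=
    hFcont.comp (tendsto_nhdsWithin_iff.2 ⟨hconv, Filter.Eventually.of_forall
      (fun k => hA (φ k))⟩)
  have hFB : Filter.Tendsto (fun k => F (B (φ k))) Filter.atTop (nhds (F q)) :=
    hFcont.comp (tendsto_nhdsWithin_iff.2 ⟨hBconv, Filter.Eventually.of_forall
      (fun k => hB (φ k))⟩)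
  have hFC : Filter.Tendsto (fun k => F (C (φ k))) Filter.atTop (nhds (F q)) :=
    hFcont.comp (tendsto_nhdsWithin_iff.2 ⟨hCconv, Filter.Eventually.of_forall
      (fun k => hC (φ k))⟩)
  have h1le : (F q).1 ≤ 0 :=
    le_of_tendsto ((continuous_fst.tendsto _).comp hFA)
      (Filter.Eventually.of_forall (fun k => le_of_lt (hfa (φ k))))
  have h1ge : 0 ≤ (F q).1 :=
    ge_of_tendsto ((continuous_fst.tendsto _).comp hFB)
      (Filter.Eventually.of_forall (fun k => hfb1 (φ k)))
  have h2le : (F q).2 ≤ 0 :=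
    le_of_tendsto ((continuous_snd.tendsto _).comp hFB)
      (Filter.Eventually.of_forall (fun k => le_of_lt (hfb2 (φ k))))
  have h2ge : 0 ≤ (F q).2 :=
    ge_of_tendsto ((continuous_snd.tendsto _).comp hFC)
      (Filter.Eventually.of_forall (fun k => hfc (φ k)))
  exact ⟨q, hq, Prod.ext (le_antisymm h1le h1ge) (le_antisymm h2le h2ge)⟩

/-- A continuous function on an interval taking only the values `-r` and `r` is constant. -/
lemma const_of_pm {τ r : ℝ} (hτ : 0 < τ) (hr : 0 < r) (u : ℝ → ℝ)
    (hu : ContinuousOn u (Set.Icc (-τ) τ))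
    (hpm : ∀ w ∈ Set.Icc (-τ) τ, u w = -r ∨ u w = r) :
    ∀ w ∈ Set.Icc (-τ) τ, u w = u (-τ) := by
  intro w hw
  by_contra hne
  have hm : (-τ) ∈ Set.Icc (-τ) τ := ⟨le_refl _, by linarith⟩
  have hsub : Set.Icc (-τ) w ⊆ Set.Icc (-τ) τ := Set.Icc_subset_Icc le_rfl hw.2
  have hcont : ContinuousOn u (Set.Icc (-τ) w) := hu.mono hsub
  rcases hpm _ hm with h1 | h1 <;> rcases hpm _ hw with h2 | h2
  · exact hne (h2.trans h1.symm)
  · have h0 : (0:ℝ) ∈ Set.Icc (u (-τ)) (u w) := by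
      rw [h1, h2]; constructor <;> linarith
    obtain ⟨x, hx, hx0⟩ := intermediate_value_Icc hw.1 hcont h0
    rcases hpm x (hsub hx) with h | h <;> linarith [hx0, h]
  · have h0 : (0:ℝ) ∈ Set.Icc (u w) (u (-τ)) := by
      rw [h1, h2]; constructor <;> linarith
    obtain ⟨x, hx, hx0⟩ := intermediate_value_Icc' hw.1 hcont h0
    rcases hpm x (hsub hx) with h | h <;> linarith [hx0, h]
  · exact hne (h2.trans h1.symm)

/-- Degree/Lefschetz argument: a regular map from a vertical strip onto a crossing horizontal
strip has a fixed point in the intersection of the strips. -/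
theorem stmt_17 (r τ : ℝ) (hr : 0 < r) (hτ : 0 < τ)
    (ψ₁ ψ₂ φ₁ φ₂ : ℝ → ℝ)
    (hψc₁ : ContinuousOn ψ₁ (Set.Icc (-τ) τ)) (hψc₂ : ContinuousOn ψ₂ (Set.Icc (-τ) τ))
    (hφc₁ : ContinuousOn φ₁ (Set.Icc (-r) r)) (hφc₂ : ContinuousOn φ₂ (Set.Icc (-r) r))
    (hψ : ∀ w ∈ Set.Icc (-τ) τ, -r < ψ₁ w ∧ ψ₁ w < ψ₂ w ∧ ψ₂ w < r)
    (hφ : ∀ v ∈ Set.Icc (-r) r, -τ < φ₁ v ∧ φ₁ v < φ₂ v ∧ φ₂ v < τ)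
    (R₁ R₂ : Set (ℝ × ℝ))
    (hR₁ : R₁ = {p : ℝ × ℝ | p.2 ∈ Set.Icc (-τ) τ ∧ p.1 ∈ Set.Icc (ψ₁ p.2) (ψ₂ p.2)})
    (hR₂ : R₂ = {p : ℝ × ℝ | p.1 ∈ Set.Icc (-r) r ∧ p.2 ∈ Set.Icc (φ₁ p.1) (φ₂ p.1)})
    (G : ℝ × ℝ → ℝ × ℝ) (hGc : ContinuousOn G R₁) (hGinj : Set.InjOn G R₁)
    (hGim : G '' R₁ = R₂)
    (hvert : ∀ p ∈ R₁, (p.1 = ψ₁ p.2 ∨ p.1 = ψ₂ p.2) → ((G p).1 = -r ∨ (G p).1 = r))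
    (hhor : ∀ p ∈ R₁, (p.2 = -τ ∨ p.2 = τ) →
      ((G p).2 = φ₁ (G p).1 ∨ (G p).2 = φ₂ (G p).1)) :
    ∃ p ∈ R₁ ∩ R₂, G p = p := by
  have hmτ : (-τ) ∈ Set.Icc (-τ) τ := ⟨le_refl _, by linarith⟩
  have hpτ : τ ∈ Set.Icc (-τ) τ := ⟨by linarith, le_refl _⟩
  have hmemV₁ : ∀ w ∈ Set.Icc (-τ) τ, ((ψ₁ w, w) : ℝ × ℝ) ∈ R₁ := by
    intro w hw
    rw [hR₁]
    exact ⟨hw, le_refl _, le_of_lt (hψ w hw).2.1⟩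
  have hmemV₂ : ∀ w ∈ Set.Icc (-τ) τ, ((ψ₂ w, w) : ℝ × ℝ) ∈ R₁ := by
    intro w hw
    rw [hR₁]
    exact ⟨hw, le_of_lt (hψ w hw).2.1, le_refl _⟩
  have hcont₁ : ContinuousOn (fun w => (G (ψ₁ w, w)).1) (Set.Icc (-τ) τ) := by
    have h1 : ContinuousOn (fun w => ((ψ₁ w, w) : ℝ × ℝ)) (Set.Icc (-τ) τ) :=
      hψc₁.prodMk continuousOn_id
    exact continuous_fst.comp_continuousOn (hGc.comp h1 hmemV₁)
  have hcont₂ : ContinuousOn (fun w => (G (ψ₂ w, w)).1) (Set.Icc (-τ) τ) := by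
    have h1 : ContinuousOn (fun w => ((ψ₂ w, w) : ℝ × ℝ)) (Set.Icc (-τ) τ) :=
      hψc₂.prodMk continuousOn_id
    exact continuous_fst.comp_continuousOn (hGc.comp h1 hmemV₂)
  have hpm₁ : ∀ w ∈ Set.Icc (-τ) τ, (G (ψ₁ w, w)).1 = -r ∨ (G (ψ₁ w, w)).1 = r :=
    fun w hw => hvert _ (hmemV₁ w hw) (Or.inl rfl)
  have hpm₂ : ∀ w ∈ Set.Icc (-τ) τ, (G (ψ₂ w, w)).1 = -r ∨ (G (ψ₂ w, w)).1 = r :=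
    fun w hw => hvert _ (hmemV₂ w hw) (Or.inr rfl)
  set c₁ : ℝ := (G (ψ₁ (-τ), -τ)).1 with hc₁def
  set c₂ : ℝ := (G (ψ₂ (-τ), -τ)).1 with hc₂def
  have hu₁ : ∀ w ∈ Set.Icc (-τ) τ, (G (ψ₁ w, w)).1 = c₁ :=
    const_of_pm hτ hr _ hcont₁ hpm₁
  have hu₂ : ∀ w ∈ Set.Icc (-τ) τ, (G (ψ₂ w, w)).1 = c₂ :=
    const_of_pm hτ hr _ hcont₂ hpm₂
  have hc₁pm : c₁ = -r ∨ c₁ = r := hpm₁ _ hmτ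
  have hc₂pm : c₂ = -r ∨ c₂ = r := hpm₂ _ hmτ
  -- the two vertical arcs go to opposite sides (pigeonhole on three corners)
  have hnece : c₁ ≠ c₂ := by
    intro he
    have hc₁Icc : c₁ ∈ Set.Icc (-r) r := by
      rcases hc₁pm with h | h <;> rw [h] <;> constructor <;> linarith
    have hm₁ : ((ψ₁ (-τ), -τ) : ℝ × ℝ) ∈ R₁ := hmemV₁ _ hmτ
    have hm₂ : ((ψ₂ (-τ), -τ) : ℝ × ℝ) ∈ R₁ := hmemV₂ _ hmτ
    have hm₃ : ((ψ₁ τ, τ) : ℝ × ℝ) ∈ R₁ := hmemV₁ _ hpτ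
    have h1 : (G (ψ₁ (-τ), -τ)).1 = c₁ := hu₁ _ hmτ
    have h2 : (G (ψ₂ (-τ), -τ)).1 = c₁ := (hu₂ _ hmτ).trans he.symm
    have h3 : (G (ψ₁ τ, τ)).1 = c₁ := hu₁ τ hpτ
    have k₁ := hhor _ hm₁ (Or.inl rfl)
    have k₂ := hhor _ hm₂ (Or.inl rfl)
    have k₃ := hhor _ hm₃ (Or.inr rfl)
    rw [h1] at k₁
    rw [h2] at k₂
    rw [h3] at k₃
    have hψne : ψ₁ (-τ) < ψ₂ (-τ) := (hψ _ hmτ).2.1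
    rcases k₁ with k₁ | k₁ <;> rcases k₂ with k₂ | k₂ <;> rcases k₃ with k₃ | k₃ <;>
      first
      | · have he2 : G (ψ₁ (-τ), -τ) = G (ψ₂ (-τ), -τ) :=
            Prod.ext (h1.trans h2.symm) (k₁.trans k₂.symm)
          have hPP := hGinj hm₁ hm₂ he2
          rw [Prod.mk.injEq] at hPP
          linarith [hPP.1]
      | · have he2 : G (ψ₁ (-τ), -τ) = G (ψ₁ τ, τ) :=
            Prod.ext (h1.trans h3.symm) (k₁.trans k₃.symm)
          have hPP := hGinj hm₁ hm₃ he2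
          rw [Prod.mk.injEq] at hPP
          linarith [hPP.2]
      | · have he2 : G (ψ₂ (-τ), -τ) = G (ψ₁ τ, τ) :=
            Prod.ext (h2.trans h3.symm) (k₂.trans k₃.symm)
          have hPP := hGinj hm₂ hm₃ he2
          rw [Prod.mk.injEq] at hPP
          linarith [hPP.2]
  -- the common setup for the Miranda argument
  have key : ∀ ε : ℝ, (ε = 1 ∨ ε = -1) → ε * c₁ = -r → ε * c₂ = r →
      ∃ p ∈ R₁ ∩ R₂, G p = p := by
    intro ε hε hεc₁ hεc₂
    have hεne : ε ≠ 0 := by rcases hε with h | h <;> rw [h] <;> norm_num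
    set y : ℝ → ℝ := fun t => (2*t - 1) * τ with hydef
    set P : ℝ × ℝ → ℝ × ℝ :=
      fun q => (ψ₁ (y q.2) + q.1 * (ψ₂ (y q.2) - ψ₁ (y q.2)), y q.2) with hPdef
    have hy : ∀ t ∈ Set.Icc (0:ℝ) 1, y t ∈ Set.Icc (-τ) τ := by
      intro t ht
      simp only [hydef]
      constructor <;> nlinarith [ht.1, ht.2]
    have hPmem : ∀ q ∈ Set.Icc (0:ℝ) 1 ×ˢ Set.Icc (0:ℝ) 1, P q ∈ R₁ := by
      intro q hq
      rw [hR₁]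
      have hw := hy q.2 hq.2
      have h12 := (hψ _ hw).2.1
      refine ⟨hw, ?_, ?_⟩
      · show ψ₁ (y q.2) ≤ ψ₁ (y q.2) + q.1 * (ψ₂ (y q.2) - ψ₁ (y q.2))
        nlinarith [hq.1.1, hq.1.2]
      · show ψ₁ (y q.2) + q.1 * (ψ₂ (y q.2) - ψ₁ (y q.2)) ≤ ψ₂ (y q.2)
        nlinarith [hq.1.1, hq.1.2]
    have hyc : Continuous y := by
      rw [hydef]
      exact ((continuous_const.mul continuous_id).sub continuous_const).mul continuous_const
    have hψ₁c : ContinuousOn (fun q : ℝ × ℝ => ψ₁ (y q.2))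
        (Set.Icc (0:ℝ) 1 ×ˢ Set.Icc (0:ℝ) 1) :=
      hψc₁.comp (hyc.comp continuous_snd).continuousOn (fun q hq => hy q.2 hq.2)
    have hψ₂c : ContinuousOn (fun q : ℝ × ℝ => ψ₂ (y q.2))
        (Set.Icc (0:ℝ) 1 ×ˢ Set.Icc (0:ℝ) 1) :=
      hψc₂.comp (hyc.comp continuous_snd).continuousOn (fun q hq => hy q.2 hq.2)
    have hPc : ContinuousOn P (Set.Icc (0:ℝ) 1 ×ˢ Set.Icc (0:ℝ) 1) := by
      apply ContinuousOn.prodMk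
      · exact hψ₁c.add (continuous_fst.continuousOn.mul (hψ₂c.sub hψ₁c))
      · exact (hyc.comp continuous_snd).continuousOn
    have hGPc : ContinuousOn (fun q => G (P q)) (Set.Icc (0:ℝ) 1 ×ˢ Set.Icc (0:ℝ) 1) :=
      hGc.comp hPc hPmem
    set F : ℝ × ℝ → ℝ × ℝ :=
      fun q => (ε * ((G (P q)).1 - (P q).1), (G (P q)).2 - (P q).2) with hFdef
    have hFc : ContinuousOn F (Set.Icc (0:ℝ) 1 ×ˢ Set.Icc (0:ℝ) 1) := by
      apply ContinuousOn.prodMk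
      · exact continuousOn_const.mul ((continuous_fst.comp_continuousOn hGPc).sub
          (continuous_fst.comp_continuousOn hPc))
      · exact (continuous_snd.comp_continuousOn hGPc).sub
          (continuous_snd.comp_continuousOn hPc)
    have hGR₂ : ∀ p ∈ R₁,
        (G p).1 ∈ Set.Icc (-r) r ∧ (G p).2 ∈ Set.Icc (φ₁ (G p).1) (φ₂ (G p).1) := by
      intro p hp
      have hmem : G p ∈ R₂ := by rw [← hGim]; exact Set.mem_image_of_mem G hp
      rw [hR₂] at hmem
      exact hmem
    obtain ⟨q, hq, hFq⟩ := miranda F hFc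
      (by
        intro t ht
        have hw := hy t ht
        have hψw := hψ _ hw
        have hP0 : P (0, t) = (ψ₁ (y t), y t) := by
          simp [hPdef]
        show ε * ((G (P (0, t))).1 - (P (0, t)).1) < 0
        rw [hP0, hu₁ _ hw]
        show ε * (c₁ - ψ₁ (y t)) < 0
        rcases hε with h | h <;> rw [h] at hεc₁ ⊢ <;> nlinarith [hψw.1, hψw.2.1, hψw.2.2]
      )
      (by
        intro t ht
        have hw := hy t ht
        have hψw := hψ _ hw
        have hP1 : P (1, t) = (ψ₂ (y t), y t) := by
          simp [hPdef]
          try ring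
        show 0 < ε * ((G (P (1, t))).1 - (P (1, t)).1)
        rw [hP1, hu₂ _ hw]
        show 0 < ε * (c₂ - ψ₂ (y t))
        rcases hε with h | h <;> rw [h] at hεc₂ ⊢ <;> nlinarith [hψw.1, hψw.2.1, hψw.2.2]
      )
      (by
        intro s hs
        have hsmem : ((s, 0) : ℝ × ℝ) ∈ Set.Icc (0:ℝ) 1 ×ˢ Set.Icc (0:ℝ) 1 :=
          ⟨hs, Set.mem_Icc.mpr (by norm_num)⟩
        have hp : P (s, 0) ∈ R₁ := hPmem (s, 0) hsmem
        have hsnd : (P (s, 0)).2 = -τ := by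
          simp [hPdef, hydef]
        have hk := hhor _ hp (Or.inl hsnd)
        have hGx := (hGR₂ _ hp).1
        have hφx := hφ _ hGx
        show 0 < (G (P (s, 0))).2 - (P (s, 0)).2
        rw [hsnd]
        rcases hk with hk | hk <;> rw [hk] <;> linarith [hφx.1, hφx.2.1, hφx.2.2]
      )
      (by
        intro s hs
        have hsmem : ((s, 1) : ℝ × ℝ) ∈ Set.Icc (0:ℝ) 1 ×ˢ Set.Icc (0:ℝ) 1 :=
          ⟨hs, Set.mem_Icc.mpr (by norm_num)⟩
        have hp : P (s, 1) ∈ R₁ := hPmem (s, 1) hsmem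
        have hsnd : (P (s, 1)).2 = τ := by
          simp [hPdef, hydef]
          try ring
        have hk := hhor _ hp (Or.inr hsnd)
        have hGx := (hGR₂ _ hp).1
        have hφx := hφ _ hGx
        show (G (P (s, 1))).2 - (P (s, 1)).2 < 0
        rw [hsnd]
        rcases hk with hk | hk <;> rw [hk] <;> linarith [hφx.1, hφx.2.1, hφx.2.2]
      )
    have hp : P q ∈ R₁ := hPmem q hq
    have h1 : ε * ((G (P q)).1 - (P q).1) = 0 := by
      have := congrArg Prod.fst hFq
      simpa [hFdef] using this
    have h2 : (G (P q)).2 - (P q).2 = 0 := by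
      have := congrArg Prod.snd hFq
      simpa [hFdef] using this
    have hfix : G (P q) = P q := by
      refine Prod.ext ?_ (by linarith)
      rcases mul_eq_zero.mp h1 with h | h
      · exact absurd h hεne
      · linarith
    refine ⟨P q, ⟨hp, ?_⟩, hfix⟩
    rw [← hGim]
    exact ⟨P q, hp, hfix⟩
  rcases hc₁pm with hc | hc
  · have hc2 : c₂ = r := by
      rcases hc₂pm with h | h
      · exact absurd (hc.trans h.symm) hnece
      · exact h
    exact key 1 (Or.inl rfl) (by rw [hc]; ring) (by rw [hc2]; ring)
  · have hc2 : c₂ = -r := by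
      rcases hc₂pm with h | h
      · exact h
      · exact absurd (hc.trans h.symm) hnece
    exact key (-1) (Or.inr rfl) (by rw [hc]; ring) (by rw [hc2]; ring)
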